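/- For the star S_n with n ≥ 3, there exists an orientation Ḡ (all arcs directed outward from the center) with γ_{2,1}(Ḡ) = 1, while the transpose orientation Ḡᵀ (all arcs directed into the center) satisfies γ_{2,1}(Ḡᵀ) = n − 1. In particular, the directed (t,r) broadcast domination number is not invariant under taking the transpose of a digraph. -/

import Mathlib

open Finset

/-- `DReach A n u v`: there is a directed walk of length `n` from `u` to `v`
in the digraph with arc relation `A`. -/
def DReach {V : Type*} (A : V → V → Prop) : ℕ → V → V → Prop
  | 0, u, v => u = v
  | n + 1, u, v => ∃ w, A u w ∧ DReach A n w v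

/-- The signal a broadcasting vertex `u` of strength `t` sends to `w`:
`t - d(u,w)` where `d` is the directed distance (0 if `d(u,w) ≥ t` or `w` unreachable). -/
noncomputable def dsignal {V : Type*} (A : V → V → Prop) (t : ℕ) (u w : V) : ℕ :=
  sSup {m : ℕ | ∃ n : ℕ, DReach A n u w ∧ m = t - n}

/-- The directed reception at `w` from the broadcast set `S` of strength `t`. -/
noncomputable def dreception {V : Type*} [Fintype V] (A : V → V → Prop) (t : ℕ)
    (S : Finset V) (w : V) : ℕ :=
  ∑ v ∈ S, dsignal A t v w

/-- `S` is a directed `(t,r)` broadcast dominating set of the digraph `A`. -/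
def IsDomSet {V : Type*} [Fintype V] (A : V → V → Prop) (t r : ℕ) (S : Finset V) : Prop :=
  ∀ w : V, r ≤ dreception A t S w

/-- The directed `(t,r)` broadcast domination number of the digraph `A`. -/
noncomputable def gamma {V : Type*} [Fintype V] (A : V → V → Prop) (t r : ℕ) : ℕ :=
  sInf {k : ℕ | ∃ S : Finset V, IsDomSet A t r S ∧ S.card = k}

/-- `A` is an orientation of the simple graph `G`: every arc is along an edge of `G`,
and each edge of `G` is directed in exactly one of the two directions. -/
def IsOrientation {V : Type*} (G : SimpleGraph V) (A : V → V → Prop) : Prop :=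
  (∀ u v, A u v → G.Adj u v) ∧ ∀ u v, G.Adj u v → (A u v ↔ ¬ A v u)

/-- `A₁` is obtained from `A₀` by reversing (flipping) a single arc. -/
def OneFlip {V : Type*} (A₀ A₁ : V → V → Prop) : Prop :=
  ∃ a b, A₀ a b ∧ A₁ b a ∧
    ∀ u v, ¬((u = a ∧ v = b) ∨ (u = b ∧ v = a)) → (A₀ u v ↔ A₁ u v)

/-- The star graph on `n` vertices: vertex with value `0` is the center. -/
def starGraph (n : ℕ) : SimpleGraph (Fin n) where
  Adj u v := u ≠ v ∧ (u.val = 0 ∨ v.val = 0)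
  symm := ⟨by intro u v h; exact ⟨h.1.symm, h.2.symm⟩⟩
  loopless := ⟨by intro u h; exact h.1 rfl⟩


section Helpers

variable {V : Type*} (A : V → V → Prop)

lemma le_dsignal {t k : ℕ} {u w : V} (h : DReach A k u w) :
    t - k ≤ dsignal A t u w := by
  apply le_csSup
  · exact ⟨t, fun m hm => by obtain ⟨j, _, rfl⟩ := hm; exact Nat.sub_le t j⟩
  · exact ⟨k, h, rfl⟩

lemma dsignal_ne_zero {t : ℕ} {u w : V} (h : dsignal A t u w ≠ 0) :
    ∃ k, DReach A k u w := by
  by_contra hc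
  push_neg at hc
  apply h
  have he : {m : ℕ | ∃ k : ℕ, DReach A k u w ∧ m = t - k} = ∅ := by
    ext m
    simp only [Set.mem_empty_iff_false, Set.mem_setOf_eq, iff_false, not_exists]
    rintro j ⟨hj, _⟩
    exact hc j hj
  rw [dsignal, he]
  simpa using csSup_empty (α := ℕ)

lemma reach_transpose {N : ℕ} {k : ℕ} {v w : Fin N}
    (h : DReach (fun u v : Fin N => v.val = 0 ∧ u.val ≠ 0) k v w) :
    v = w ∨ w.val = 0 := by
  induction k generalizing v with
  | zero => exact Or.inl h
  | succ k ih =>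
    obtain ⟨x, hx, hr⟩ := h
    right
    rcases ih hr with h1 | h2
    · exact h1 ▸ hx.1
    · exact h2

end Helpers

theorem stmt13 (n : ℕ) (hn : 3 ≤ n) :
    IsOrientation (starGraph n) (fun u v => u.val = 0 ∧ v.val ≠ 0) ∧
    gamma (fun u v : Fin n => u.val = 0 ∧ v.val ≠ 0) 2 1 = 1 ∧
    gamma (fun u v : Fin n => v.val = 0 ∧ u.val ≠ 0) 2 1 = n - 1 := by
  have hN : 0 < n := by omega
  set A₁ : Fin n → Fin n → Prop := fun u v => u.val = 0 ∧ v.val ≠ 0 with hA1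
  set A₂ : Fin n → Fin n → Prop := fun u v => v.val = 0 ∧ u.val ≠ 0 with hA2
  set c : Fin n := ⟨0, hN⟩ with hcdef
  have empty_not : ∀ (A : Fin n → Fin n → Prop) (S : Finset (Fin n)),
      IsDomSet A 2 1 S → S ≠ ∅ := by
    intro A S hS hem
    have h1 := hS c
    rw [dreception, hem, Finset.sum_empty] at h1
    omega
  refine ⟨⟨?_, ?_⟩, ?_, ?_⟩
  · rintro u v ⟨h0, h1⟩
    exact ⟨fun he => h1 (he ▸ h0), Or.inl h0⟩
  · rintro u v ⟨hne, h⟩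
    have hv : u.val ≠ v.val := fun h' => hne (Fin.ext h')
    constructor
    · rintro ⟨h0, h1⟩ ⟨h2, h3⟩
      omega
    · intro hnot
      rcases h with h | h
      · exact ⟨h, by omega⟩
      · exact absurd ⟨h, by omega⟩ hnot
  · -- gamma A₁ = 1
    have domS : IsDomSet A₁ 2 1 {c} := by
      intro w
      rw [dreception, Finset.sum_singleton]
      by_cases hw : w = c
      · have h0 : DReach A₁ 0 c w := hw.symm
        have := le_dsignal A₁ (t := 2) h0
        omega
      · have hwv : w.val ≠ 0 := fun h' => hw (Fin.ext h')
        have hr : DReach A₁ 1 c w := ⟨w, ⟨rfl, hwv⟩, rfl⟩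
        have := le_dsignal A₁ (t := 2) hr
        omega
    have h1 : (1 : ℕ) ∈ {k : ℕ | ∃ S : Finset (Fin n), IsDomSet A₁ 2 1 S ∧ S.card = k} :=
      ⟨{c}, domS, Finset.card_singleton c⟩
    refine le_antisymm (Nat.sInf_le h1) ?_
    obtain ⟨S, hS, hSc⟩ := Nat.sInf_mem (⟨1, h1⟩ : Set.Nonempty _)
    rw [gamma, ← hSc]
    have := empty_not A₁ S hS
    have : S.Nonempty := Finset.nonempty_iff_ne_empty.2 this
    exact Finset.card_pos.2 this
  · -- gamma A₂ = n - 1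
    set L : Finset (Fin n) := Finset.univ.erase c with hL
    have hcard : L.card = n - 1 := by
      rw [hL, Finset.card_erase_of_mem (Finset.mem_univ c), Finset.card_univ,
        Fintype.card_fin]
    have domL : IsDomSet A₂ 2 1 L := by
      intro w
      rw [dreception]
      by_cases hw : w = c
      · have hw0 : w.val = 0 := by rw [hw]
        set v1 : Fin n := ⟨1, by omega⟩ with hv1def
        have hv1 : v1 ∈ L := by
          rw [hL, Finset.mem_erase]
          exact ⟨fun h' => by simpa [hv1def, hcdef, Fin.ext_iff] using h', Finset.mem_univ _⟩
        have hr : DReach A₂ 1 v1 w := ⟨w, ⟨hw0, by simp [hv1def]⟩, rfl⟩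
        have hs := le_dsignal A₂ (t := 2) hr
        calc (1 : ℕ) ≤ dsignal A₂ 2 v1 w := by omega
          _ ≤ ∑ v ∈ L, dsignal A₂ 2 v w :=
            Finset.single_le_sum (f := fun v => dsignal A₂ 2 v w) (fun i _ => Nat.zero_le _) hv1
      · have hwL : w ∈ L := by
          rw [hL, Finset.mem_erase]
          exact ⟨hw, Finset.mem_univ _⟩
        have h0 : DReach A₂ 0 w w := rfl
        have hs := le_dsignal A₂ (t := 2) h0
        calc (1 : ℕ) ≤ dsignal A₂ 2 w w := by omega
          _ ≤ ∑ v ∈ L, dsignal A₂ 2 v w :=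
            Finset.single_le_sum (f := fun v => dsignal A₂ 2 v w) (fun i _ => Nat.zero_le _) hwL
    have hsubset : ∀ S : Finset (Fin n), IsDomSet A₂ 2 1 S → L ⊆ S := by
      intro S hS w hwL
      have hw : w ≠ c := (Finset.mem_erase.1 hwL).1
      have hwv : w.val ≠ 0 := fun h' => hw (Fin.ext h')
      have h1 := hS w
      rw [dreception] at h1
      have hex : ∃ v ∈ S, dsignal A₂ 2 v w ≠ 0 := by
        by_contra hc'
        push_neg at hc'
        rw [Finset.sum_eq_zero hc'] at h1
        omega
      obtain ⟨v, hvS, hvd⟩ := hex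
      obtain ⟨k, hk⟩ := dsignal_ne_zero A₂ hvd
      rcases reach_transpose hk with rfl | h0
      · exact hvS
      · exact absurd h0 hwv
    have hmem : (n - 1 : ℕ) ∈
        {k : ℕ | ∃ S : Finset (Fin n), IsDomSet A₂ 2 1 S ∧ S.card = k} := ⟨L, domL, hcard⟩
    refine le_antisymm (Nat.sInf_le hmem) ?_
    obtain ⟨S, hS, hSc⟩ := Nat.sInf_mem (⟨n - 1, hmem⟩ : Set.Nonempty _)
    rw [gamma, ← hSc, ← hcard]
    exact Finset.card_le_card (hsubset S hS)
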